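/- arXiv:2306.15027 — 4 statements merged into one kernel-verified Lean document; each statement's English description precedes it below -/
import Mathlib

section
/- Let $X = \sum_{k\ge 1} \mathbf{1}_{A_k}$ be a sum of indicators of independent events with $b = \sum_k \mathbb{P}(A_k) < \infty$, and let $a = \sum_k \mathbb{P}(A_k)(1-\mathbb{P}(A_k))$ be the variance of $X$. Then for every real $\vartheta$, $\mathbb{E}\exp(\vartheta(X - b)) \le \exp\big(\tfrac{1}{2}\vartheta^2 e^{|\vartheta|} a\big)$. -/
open MeasureTheory ProbabilityTheory Real Set Filter Topology


lemma exp_quad (x : ℝ) : Real.exp x ≤ 1 + x + x^2/2 * Real.exp |x| := by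
  rcases le_or_gt x 0 with hx | hx
  · have h1 : Real.exp x ≤ 1 + x + x^2/2 := by
      have hanti : Antitone (fun y : ℝ => 1 + y + y^2/2 - Real.exp y) := by
        apply antitone_of_deriv_nonpos
        · fun_prop
        · intro y
          have hd : HasDerivAt (fun y : ℝ => 1 + y + y^2/2 - Real.exp y)
              (1 + y - Real.exp y) y := by
            have h1 : HasDerivAt (fun y : ℝ => 1 + y + y^2/2) (0 + 1 + (2*y^(2-1))/2) y := by
              exact (((hasDerivAt_const y (1:ℝ)).add (hasDerivAt_id y)).add
                ((hasDerivAt_pow 2 y).div_const 2))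
            have h2 := (Real.hasDerivAt_exp y)
            have := h1.sub h2
            refine this.congr_deriv ?_
            simp
            try ring
          rw [hd.deriv]
          have := Real.add_one_le_exp y
          linarith
      have := hanti hx
      simp only [Real.exp_zero] at this
      nlinarith
    have h2 : (1:ℝ) ≤ Real.exp |x| := Real.one_le_exp (abs_nonneg x)
    nlinarith [sq_nonneg x]
  · rw [abs_of_pos hx]
    -- exp x - 1 - x = ∫ t in 0..x, (exp t - 1) ≤ ∫ t in 0..x, t * exp x = x^2/2 * exp x
    have key : ∫ t in (0:ℝ)..x, (Real.exp t - 1) ≤ ∫ t in (0:ℝ)..x, t * Real.exp x := by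
      apply intervalIntegral.integral_mono_on hx.le
      · exact (Continuous.intervalIntegrable (by continuity) _ _)
      · exact (Continuous.intervalIntegrable (by continuity) _ _)
      · intro t ht
        simp only [Set.mem_Icc] at ht
        have h1 : Real.exp t - 1 ≤ t * Real.exp t := by
          have := Real.add_one_le_exp (-t)
          have h2 := Real.exp_pos t
          have h3 : Real.exp (-t) * Real.exp t = 1 := by
            rw [← Real.exp_add]; simp
          nlinarith
        have h2 : t * Real.exp t ≤ t * Real.exp x :=
          mul_le_mul_of_nonneg_left (Real.exp_le_exp.2 ht.2) ht.1
        linarith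
    rw [intervalIntegral.integral_sub (Continuous.intervalIntegrable (by continuity) _ _)
      (intervalIntegrable_const), integral_exp, intervalIntegral.integral_const,
      intervalIntegral.integral_mul_const, integral_id] at key
    simp at key
    nlinarith [key]

lemma bernoulli_mgf (θ p : ℝ) (h0 : 0 ≤ p) (h1 : p ≤ 1) :
    (1 + p * (Real.exp θ - 1)) * Real.exp (-(θ * p)) ≤
      Real.exp (θ^2/2 * Real.exp |θ| * (p * (1-p))) := by
  have hsplit : Real.exp θ * Real.exp (-(θ*p)) = Real.exp (θ*(1-p)) := by
    rw [← Real.exp_add]; ring_nf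
  have habs1 : Real.exp |θ*(1-p)| ≤ Real.exp |θ| := by
    apply Real.exp_le_exp.2
    rw [abs_mul]
    nlinarith [abs_nonneg θ, abs_of_nonneg (by linarith : (0:ℝ) ≤ 1 - p)]
  have habs2 : Real.exp |(-(θ*p))| ≤ Real.exp |θ| := by
    apply Real.exp_le_exp.2
    rw [abs_neg, abs_mul]
    nlinarith [abs_nonneg θ, abs_of_nonneg h0]
  have e1 := exp_quad (θ*(1-p))
  have e2 := exp_quad (-(θ*p))
  have e1' : Real.exp (θ*(1-p)) ≤ 1 + θ*(1-p) + (θ*(1-p))^2/2 * Real.exp |θ| := by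
    nlinarith [sq_nonneg (θ*(1-p))]
  have e2' : Real.exp (-(θ*p)) ≤ 1 - θ*p + (θ*p)^2/2 * Real.exp |θ| := by
    nlinarith [sq_nonneg (θ*p)]
  have hfinal := Real.add_one_le_exp (θ^2/2 * Real.exp |θ| * (p * (1-p)))
  have hLHS : (1 + p * (Real.exp θ - 1)) * Real.exp (-(θ * p))
      = (1-p) * Real.exp (-(θ*p)) + p * Real.exp (θ*(1-p)) := by
    rw [← hsplit]; ring
  rw [hLHS]
  have c1 : p * Real.exp (θ*(1-p)) ≤ p * (1 + θ*(1-p) + (θ*(1-p))^2/2 * Real.exp |θ|) :=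
    mul_le_mul_of_nonneg_left e1' h0
  have c2 : (1-p) * Real.exp (-(θ*p)) ≤ (1-p) * (1 - θ*p + (θ*p)^2/2 * Real.exp |θ|) :=
    mul_le_mul_of_nonneg_left e2' (by linarith)
  nlinarith [Real.exp_pos |θ|, sq_nonneg θ, mul_nonneg (mul_nonneg h0 (by linarith : (0:ℝ) ≤ 1-p)) (Real.exp_pos |θ|).le]

theorem stmt1 {Ω : Type*} [MeasurableSpace Ω] (μ : Measure Ω) [IsProbabilityMeasure μ]
    (A : ℕ → Set Ω) (hmeas : ∀ k, MeasurableSet (A k))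
    (hindep : iIndepSet A μ)
    (b : ℝ) (hb : HasSum (fun k => (μ (A k)).toReal) b)
    (a : ℝ) (ha : HasSum (fun k => (μ (A k)).toReal * (1 - (μ (A k)).toReal)) a)
    (X : Ω → ℝ) (hX : ∀ ω, X ω = ∑' k, (A k).indicator (fun _ => (1 : ℝ)) ω)
    (hfin : ∀ᵐ ω ∂μ, Summable (fun k => (A k).indicator (fun _ => (1 : ℝ)) ω))
    (θ : ℝ) :
    ∫ ω, Real.exp (θ * (X ω - b)) ∂μ ≤ Real.exp (θ ^ 2 / 2 * Real.exp |θ| * a) := by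
  set p : ℕ → ℝ := fun k => (μ (A k)).toReal with hp
  have hp0 : ∀ k, 0 ≤ p k := fun k => ENNReal.toReal_nonneg
  have hp1 : ∀ k, p k ≤ 1 := by
    intro k
    have := prob_le_one (μ := μ) (s := A k)
    simpa using ENNReal.toReal_mono ENNReal.one_ne_top this
  set Y : ℕ → Ω → ℝ := fun k => (A k).indicator (fun _ => (1 : ℝ)) with hY
  have hYmeas : ∀ k, Measurable (Y k) := fun k => measurable_const.indicator (hmeas k)
  have hY01 : ∀ k ω, 0 ≤ Y k ω ∧ Y k ω ≤ 1 := by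
    intro k ω
    by_cases h : ω ∈ A k <;> simp [hY, Set.indicator_of_mem, Set.indicator_of_notMem, h]
  have hindepY : iIndepFun Y μ :=
    hindep.iIndepFun_indicator
  -- mgf of each indicator
  have hmgf : ∀ k, mgf (Y k) μ θ = 1 + p k * (Real.exp θ - 1) := by
    intro k
    have heq : ∀ ω, Real.exp (θ * Y k ω) = 1 + (Real.exp θ - 1) * Y k ω := by
      intro ω
      by_cases h : ω ∈ A k <;>
        simp [hY, Set.indicator_of_mem, Set.indicator_of_notMem, h] <;> ring
    have hYint : Integrable (Y k) μ := (integrable_const (1:ℝ)).indicator (hmeas k)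
    have hYint2 : ∫ ω, Y k ω ∂μ = p k := by
      exact MeasureTheory.integral_indicator_one (μ := μ) (hmeas k)
    rw [mgf]
    calc ∫ ω, Real.exp (θ * Y k ω) ∂μ
        = ∫ ω, (1 + (Real.exp θ - 1) * Y k ω) ∂μ := by
          exact integral_congr_ae (ae_of_all _ heq)
      _ = 1 + p k * (Real.exp θ - 1) := by
          rw [integral_add (integrable_const 1) (hYint.const_mul _),
            MeasureTheory.integral_const_mul, hYint2, integral_const]
          simp
          ring
  -- partial sums
  set S : ℕ → Ω → ℝ := fun n => ∑ k ∈ Finset.range n, Y k with hS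
  set bn : ℕ → ℝ := fun n => ∑ k ∈ Finset.range n, p k with hbn
  set c : ℝ := θ ^ 2 / 2 * Real.exp |θ| with hc
  have hc0 : 0 ≤ c := by positivity
  set gn : ℕ → Ω → ℝ := fun n ω => Real.exp (θ * (S n ω - b)) with hgn
  set g : Ω → ℝ := fun ω => Real.exp (θ * (X ω - b)) with hg
  -- bound on integral of gn
  have hbound : ∀ n, ∫ ω, gn n ω ∂μ ≤ Real.exp (θ * (bn n - b) + c * a) := by
    intro n
    have h1 : ∀ ω, gn n ω = Real.exp (θ * S n ω) * Real.exp (-(θ * b)) := by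
      intro ω
      show Real.exp (θ * (S n ω - b)) = _
      rw [← Real.exp_add]
      congr 1
      ring
    have h2 : ∫ ω, gn n ω ∂μ = mgf (S n) μ θ * Real.exp (-(θ * b)) := by
      simp only [h1]
      rw [integral_mul_const]
      rfl
    rw [h2, hindepY.mgf_sum hYmeas]
    have h3 : ∀ k ∈ Finset.range n, mgf (Y k) μ θ = 1 + p k * (Real.exp θ - 1) :=
      fun k _ => hmgf k
    rw [Finset.prod_congr rfl h3]
    -- ∏ (1 + p k (e^θ - 1)) ≤ ∏ exp (θ p k + c p k (1 - p k))
    have h4 : ∏ k ∈ Finset.range n, (1 + p k * (Real.exp θ - 1))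
        ≤ ∏ k ∈ Finset.range n, Real.exp (θ * p k + c * (p k * (1 - p k))) := by
      apply Finset.prod_le_prod
      · intro k _
        nlinarith [Real.exp_pos θ, hp0 k, hp1 k]
      · intro k _
        have := bernoulli_mgf θ (p k) (hp0 k) (hp1 k)
        have hpos := Real.exp_pos (-(θ * p k))
        rw [hc]
        calc 1 + p k * (Real.exp θ - 1)
            = ((1 + p k * (Real.exp θ - 1)) * Real.exp (-(θ * p k))) * Real.exp (θ * p k) := by
              rw [mul_assoc, ← Real.exp_add]; simp
          _ ≤ Real.exp (θ^2/2 * Real.exp |θ| * (p k * (1 - p k))) * Real.exp (θ * p k) := by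
              apply mul_le_mul_of_nonneg_right this (Real.exp_pos _).le
          _ = Real.exp (θ * p k + θ^2/2 * Real.exp |θ| * (p k * (1 - p k))) := by
              rw [← Real.exp_add]; ring_nf
    calc (∏ k ∈ Finset.range n, (1 + p k * (Real.exp θ - 1))) * Real.exp (-(θ * b))
        ≤ (∏ k ∈ Finset.range n, Real.exp (θ * p k + c * (p k * (1 - p k)))) *
            Real.exp (-(θ * b)) := by
          apply mul_le_mul_of_nonneg_right h4 (Real.exp_pos _).le
      _ = Real.exp (θ * bn n + c * ∑ k ∈ Finset.range n, p k * (1 - p k)) *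
            Real.exp (-(θ * b)) := by
          rw [← Real.exp_sum]
          congr 1
          rw [Finset.sum_add_distrib, ← Finset.mul_sum, ← Finset.mul_sum]
      _ ≤ Real.exp (θ * (bn n - b) + c * a) := by
          rw [← Real.exp_add]
          apply Real.exp_le_exp.2
          have hsum : ∑ k ∈ Finset.range n, p k * (1 - p k) ≤ a := by
            apply sum_le_hasSum _ _ ha
            intro k _
            nlinarith [hp0 k, hp1 k]
          have := mul_le_mul_of_nonneg_left hsum hc0
          linarith
  -- integrability of each gn
  have hSapp : ∀ n ω, S n ω = ∑ k ∈ Finset.range n, Y k ω := by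
    intro n ω; simp [hS]
  have hSnmeas : ∀ n, Measurable (S n) := by
    intro n
    have hfun : S n = fun ω => ∑ k ∈ Finset.range n, Y k ω := funext (hSapp n)
    rw [hfun]
    exact Finset.measurable_sum _ (fun k _ => hYmeas k)
  have hgnmeas : ∀ n, Measurable (gn n) := by
    intro n
    exact (Real.measurable_exp.comp ((measurable_const.mul ((hSnmeas n).sub measurable_const))))
  have hgnint : ∀ n, Integrable (gn n) μ := by
    intro n
    apply Integrable.mono' (integrable_const (Real.exp (|θ| * (n + |b|))))
      (hgnmeas n).aestronglyMeasurable
    apply ae_of_all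
    intro ω
    rw [Real.norm_eq_abs, abs_of_pos (Real.exp_pos _)]
    apply Real.exp_le_exp.2
    have hSn0 : 0 ≤ S n ω := by
      rw [hSapp]
      exact Finset.sum_nonneg (fun k _ => (hY01 k ω).1)
    have hSn1 : S n ω ≤ n := by
      rw [hSapp]
      calc ∑ k ∈ Finset.range n, Y k ω ≤ ∑ k ∈ Finset.range n, (1:ℝ) :=
            Finset.sum_le_sum (fun k _ => (hY01 k ω).2)
        _ = n := by simp
    have h1 : |θ * (S n ω - b)| ≤ |θ| * (n + |b|) := by
      rw [abs_mul]
      apply mul_le_mul_of_nonneg_left _ (abs_nonneg θ)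
      have h3 : |S n ω| ≤ n := by rw [abs_of_nonneg hSn0]; exact hSn1
      calc |S n ω - b| ≤ |S n ω| + |b| := abs_sub _ _
        _ ≤ n + |b| := by linarith
    exact le_trans (le_abs_self _) h1
  -- a.e. convergence
  have hconv : ∀ᵐ ω ∂μ, Tendsto (fun n => gn n ω) atTop (𝓝 (g ω)) := by
    filter_upwards [hfin] with ω hsum
    have h1 : Tendsto (fun n => S n ω) atTop (𝓝 (X ω)) := by
      rw [hX ω]
      have := hsum.hasSum.tendsto_sum_nat
      exact this.congr (fun n => (hSapp n ω).symm)
    have h2 : Continuous fun y : ℝ => Real.exp (θ * (y - b)) := by continuity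
    exact (h2.tendsto (X ω)).comp h1
  -- Fatou
  have hfatou : ∫⁻ ω, ENNReal.ofReal (g ω) ∂μ ≤
      Filter.liminf (fun n => ∫⁻ ω, ENNReal.ofReal (gn n ω) ∂μ) atTop := by
    have h1 : ∫⁻ ω, ENNReal.ofReal (g ω) ∂μ =
        ∫⁻ ω, Filter.liminf (fun n => ENNReal.ofReal (gn n ω)) atTop ∂μ := by
      apply lintegral_congr_ae
      filter_upwards [hconv] with ω hω
      exact ((ENNReal.continuous_ofReal.tendsto _).comp hω).liminf_eq.symm
    rw [h1]
    exact lintegral_liminf_le (fun n => (hgnmeas n).ennreal_ofReal)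
  -- liminf bound
  have hrlim : Tendsto (fun n => Real.exp (θ * (bn n - b) + c * a)) atTop
      (𝓝 (Real.exp (c * a))) := by
    have h1 : Tendsto bn atTop (𝓝 b) := by
      have := hb.tendsto_sum_nat
      exact this
    have h2 : Tendsto (fun n => θ * (bn n - b) + c * a) atTop (𝓝 (θ * (b - b) + c * a)) := by
      apply Tendsto.add _ tendsto_const_nhds
      exact (tendsto_const_nhds.mul ((h1.sub tendsto_const_nhds)))
    simp only [sub_self, mul_zero, zero_add] at h2
    exact (Real.continuous_exp.tendsto _).comp h2
  have hliminf : Filter.liminf (fun n => ∫⁻ ω, ENNReal.ofReal (gn n ω) ∂μ) atTop ≤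
      ENNReal.ofReal (Real.exp (c * a)) := by
    have h1 : ∀ n, ∫⁻ ω, ENNReal.ofReal (gn n ω) ∂μ ≤
        ENNReal.ofReal (Real.exp (θ * (bn n - b) + c * a)) := by
      intro n
      rw [← ofReal_integral_eq_lintegral_ofReal (hgnint n)
        (ae_of_all _ fun ω => (Real.exp_pos _).le)]
      exact ENNReal.ofReal_le_ofReal (hbound n)
    calc Filter.liminf (fun n => ∫⁻ ω, ENNReal.ofReal (gn n ω) ∂μ) atTop
        ≤ Filter.liminf (fun n => ENNReal.ofReal (Real.exp (θ * (bn n - b) + c * a))) atTop := by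
          apply Filter.liminf_le_liminf (Filter.Eventually.of_forall h1)
      _ = ENNReal.ofReal (Real.exp (c * a)) := by
          exact ((ENNReal.continuous_ofReal.tendsto _).comp hrlim).liminf_eq
  -- conclude
  show ∫ ω, g ω ∂μ ≤ Real.exp (c * a)
  by_cases hint : Integrable g μ
  · have heq : ∫ ω, g ω ∂μ = (∫⁻ ω, ENNReal.ofReal (g ω) ∂μ).toReal := by
      rw [integral_eq_lintegral_of_nonneg_ae (ae_of_all _ fun ω => (Real.exp_pos _).le)
        hint.aestronglyMeasurable]
    rw [heq]
    have h := le_trans hfatou hliminf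
    calc (∫⁻ ω, ENNReal.ofReal (g ω) ∂μ).toReal
        ≤ (ENNReal.ofReal (Real.exp (c * a))).toReal := by
          apply ENNReal.toReal_mono ENNReal.ofReal_ne_top h
      _ = Real.exp (c * a) := ENNReal.toReal_ofReal (Real.exp_pos _).le
  · rw [integral_undef hint]
    positivity
end

section
/- For every integer $j \ge 2$ and every real $t > 0$: $\sum_{i=0}^{j-1}\frac{(2t)^i}{i!} - \Big(\sum_{i=0}^{j-1}\frac{t^i}{i!}\Big)^2 = -\sum_{i=j}^{2(j-1)}\frac{t^i}{i!}\sum_{k=i-(j-1)}^{j-1}\binom{i}{k} \le 0$. -/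
open Real Finset

private lemma cauchy (j : ℕ) (hj : 1 ≤ j) (t : ℝ) :
    (∑ i ∈ Finset.range j, t ^ i / (Nat.factorial i : ℝ)) ^ 2
    = ∑ n ∈ Finset.range (2 * j - 1),
        t ^ n / (Nat.factorial n : ℝ)
          * ∑ a ∈ Finset.Icc (n - (j - 1)) (min n (j - 1)), (Nat.choose n a : ℝ) := by
  rw [sq, Finset.sum_mul_sum, ← Finset.sum_product']
  simp_rw [Finset.mul_sum]
  rw [Finset.sum_sigma']
  refine Finset.sum_nbij' (fun p => ⟨p.1 + p.2, p.1⟩) (fun q => (q.2, q.1 - q.2)) ?_ ?_ ?_ ?_ ?_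
  · rintro ⟨a, b⟩ h
    simp only [Finset.mem_product, Finset.mem_range] at h
    simp only [Finset.mem_sigma, Finset.mem_range, Finset.mem_Icc, le_min_iff]
    omega
  · rintro ⟨n, a⟩ h
    simp only [Finset.mem_sigma, Finset.mem_range, Finset.mem_Icc, le_min_iff] at h
    simp only [Finset.mem_product, Finset.mem_range]
    omega
  · rintro ⟨a, b⟩ h; simp
  · rintro ⟨n, a⟩ h
    simp only [Finset.mem_sigma, Finset.mem_range, Finset.mem_Icc, le_min_iff] at h
    simp only [Sigma.mk.inj_iff]
    constructor
    · omega
    · exact heq_of_eq rfl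
  · rintro ⟨a, b⟩ h
    simp only [Finset.mem_product, Finset.mem_range] at h
    simp only [Nat.add_sub_cancel_left]  -- maybe not needed
    have hfac : (Nat.choose (a + b) a : ℝ) * a.factorial * b.factorial = (a + b).factorial := by
      have := Nat.choose_mul_factorial_mul_factorial (Nat.le_add_right a b)
      rw [Nat.add_sub_cancel_left] at this
      exact_mod_cast this
    have h1 : (Nat.factorial a : ℝ) ≠ 0 := Nat.cast_ne_zero.mpr (Nat.factorial_ne_zero a)
    have h2 : (Nat.factorial b : ℝ) ≠ 0 := Nat.cast_ne_zero.mpr (Nat.factorial_ne_zero b)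
    have h3 : (Nat.factorial (a + b) : ℝ) ≠ 0 := Nat.cast_ne_zero.mpr (Nat.factorial_ne_zero _)
    field_simp
    rw [pow_add]
    rw [← hfac]
    ring

theorem stmt10 (j : ℕ) (hj : 2 ≤ j) (t : ℝ) (ht : 0 < t) :
    (∑ i ∈ Finset.range j, (2 * t) ^ i / (Nat.factorial i : ℝ))
      - (∑ i ∈ Finset.range j, t ^ i / (Nat.factorial i : ℝ)) ^ 2
      = -∑ i ∈ Finset.Icc j (2 * (j - 1)),
          t ^ i / (Nat.factorial i : ℝ)
            * ∑ k ∈ Finset.Icc (i - (j - 1)) (j - 1), (Nat.choose i k : ℝ) ∧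
    (∑ i ∈ Finset.range j, (2 * t) ^ i / (Nat.factorial i : ℝ))
      - (∑ i ∈ Finset.range j, t ^ i / (Nat.factorial i : ℝ)) ^ 2 ≤ 0 := by
  have hEq : (∑ i ∈ Finset.range j, (2 * t) ^ i / (Nat.factorial i : ℝ))
      - (∑ i ∈ Finset.range j, t ^ i / (Nat.factorial i : ℝ)) ^ 2
      = -∑ i ∈ Finset.Icc j (2 * (j - 1)),
          t ^ i / (Nat.factorial i : ℝ)
            * ∑ k ∈ Finset.Icc (i - (j - 1)) (j - 1), (Nat.choose i k : ℝ) := by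
    rw [cauchy j (by omega) t]
    have hsplit : Finset.range (2 * j - 1)
        = Finset.range j ∪ Finset.Icc j (2 * (j - 1)) := by
      rw [Finset.range_eq_Ico, ← Finset.Ico_add_one_right_eq_Icc]
      have h2j : 2 * (j - 1) + 1 = 2 * j - 1 := by omega
      rw [h2j, ← Finset.Ico_union_Ico_eq_Ico (by omega : 0 ≤ j) (by omega : j ≤ 2 * j - 1), Finset.range_eq_Ico]
    have hdisj : Disjoint (Finset.range j) (Finset.Icc j (2 * (j - 1))) := by
      simp only [Finset.disjoint_left, Finset.mem_range, Finset.mem_Icc]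
      omega
    rw [hsplit, Finset.sum_union hdisj]
    have h1 : ∀ n ∈ Finset.range j,
        t ^ n / (Nat.factorial n : ℝ)
          * ∑ a ∈ Finset.Icc (n - (j - 1)) (min n (j - 1)), (Nat.choose n a : ℝ)
        = (2 * t) ^ n / (Nat.factorial n : ℝ) := by
      intro n hn
      simp only [Finset.mem_range] at hn
      have hmin : min n (j - 1) = n := by omega
      have hlo : n - (j - 1) = 0 := by omega
      rw [hmin, hlo]
      have : ∑ a ∈ Finset.Icc 0 n, (Nat.choose n a : ℝ) = 2 ^ n := by
        rw [← Finset.Ico_add_one_right_eq_Icc, Nat.Ico_zero_eq_range]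
        exact_mod_cast Nat.sum_range_choose n
      rw [this, mul_pow]
      ring
    rw [Finset.sum_congr rfl h1]
    have h2 : ∀ n ∈ Finset.Icc j (2 * (j - 1)),
        t ^ n / (Nat.factorial n : ℝ)
          * ∑ a ∈ Finset.Icc (n - (j - 1)) (min n (j - 1)), (Nat.choose n a : ℝ)
        = t ^ n / (Nat.factorial n : ℝ)
          * ∑ k ∈ Finset.Icc (n - (j - 1)) (j - 1), (Nat.choose n k : ℝ) := by
      intro n hn
      simp only [Finset.mem_Icc] at hn
      have hmin : min n (j - 1) = j - 1 := by omega
      rw [hmin]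
    rw [Finset.sum_congr rfl h2]
    ring
  refine ⟨hEq, ?_⟩
  rw [hEq, neg_nonpos]
  apply Finset.sum_nonneg
  intro i hi
  apply mul_nonneg
  · positivity
  · exact Finset.sum_nonneg fun k _ => by positivity
end

section
/- Define $f(x) = \Phi(\sqrt{2}x) - \Phi(-\sqrt{2}x) - \sqrt{2}e^{-x^2/2}\Phi(x) + \sqrt{2}e^{-x^2/2}\Phi(-x) + 2\sqrt{\pi}\,x\,\Phi(-x)\Phi(x)$ for $x \ge 0$, where $\Phi$ is the standard normal distribution function. Then $f'(x) = 2\sqrt{\pi}\,\Phi(-x)\Phi(x)$; consequently $f$ is strictly increasing on $[0,\infty)$, continuous, with $f(0)=0$ and $\lim_{x\to\infty} f(x) = 1$, so for every $\varsigma \in (0,1)$ there is a unique $x > 0$ with $f(x) = 1-\varsigma$. -/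
open Real Filter Set MeasureTheory Topology

lemma myG_integrable : MeasureTheory.Integrable (fun u : ℝ => Real.exp (-u ^ 2 / 2)) := by
  have h := integrable_exp_neg_mul_sq (by norm_num : (0:ℝ) < 1/2)
  convert h using 2 with u
  ring_nf

lemma myG_cont : Continuous (fun u : ℝ => Real.exp (-u ^ 2 / 2)) := by
  continuity

lemma myG_hasDeriv (x : ℝ) :
    HasDerivAt (fun y : ℝ => ∫ u in Iic y, Real.exp (-u ^ 2 / 2)) (Real.exp (-x ^ 2 / 2)) x := by
  have key : (fun y : ℝ => ∫ u in Iic y, Real.exp (-u ^ 2 / 2))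
      = fun y : ℝ => (∫ u in Iic (0:ℝ), Real.exp (-u ^ 2 / 2)) + ∫ u in (0:ℝ)..y, Real.exp (-u ^ 2 / 2) := by
    funext y
    have := intervalIntegral.integral_Iic_sub_Iic (f := fun u : ℝ => Real.exp (-u ^ 2 / 2))
      (μ := volume) (a := (0:ℝ)) (b := y) myG_integrable.integrableOn myG_integrable.integrableOn
    linarith
  rw [key]
  have h := intervalIntegral.integral_hasDerivAt_right
    (f := fun u : ℝ => Real.exp (-u ^ 2 / 2)) (a := (0:ℝ)) (b := x)
    (myG_cont.intervalIntegrable 0 x) (myG_cont.stronglyMeasurableAtFilter _ _)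
    myG_cont.continuousAt
  exact h.const_add _

lemma myG_total : (∫ u : ℝ, Real.exp (-u ^ 2 / 2)) = Real.sqrt (2 * π) := by
  have h := integral_gaussian (1/2 : ℝ)
  have h2 : (∫ u : ℝ, Real.exp (-u ^ 2 / 2)) = ∫ u : ℝ, Real.exp (-(1/2) * u ^ 2) := by
    congr 1; ext u; ring_nf
  rw [h2, h, show π / (1/2 : ℝ) = 2 * π by ring]

lemma myG_neg (x : ℝ) : (∫ u in Iic (-x), Real.exp (-u ^ 2 / 2))
    = ∫ u in Ioi x, Real.exp (-u ^ 2 / 2) := by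
  have := integral_comp_neg_Iic (-x) (fun u : ℝ => Real.exp (-u ^ 2 / 2))
  simp only [neg_neg] at this
  rw [← this]
  congr 1; ext u; rw [neg_sq]

lemma myG_sum (x : ℝ) : (∫ u in Iic x, Real.exp (-u ^ 2 / 2))
    + (∫ u in Iic (-x), Real.exp (-u ^ 2 / 2)) = Real.sqrt (2 * π) := by
  rw [myG_neg, intervalIntegral.integral_Iic_add_Ioi myG_integrable.integrableOn
    myG_integrable.integrableOn, myG_total]

lemma myG_pos (x : ℝ) : 0 < ∫ u in Iic x, Real.exp (-u ^ 2 / 2) := by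
  have key := intervalIntegral.integral_Iic_sub_Iic (f := fun u : ℝ => Real.exp (-u ^ 2 / 2))
    (μ := volume) (a := x - 1) (b := x) myG_integrable.integrableOn myG_integrable.integrableOn
  have h1 : 0 ≤ ∫ u in Iic (x - 1), Real.exp (-u ^ 2 / 2) :=
    setIntegral_nonneg measurableSet_Iic (fun u _ => (Real.exp_pos _).le)
  have h2 : 0 < ∫ u in (x-1)..x, Real.exp (-u ^ 2 / 2) := by
    apply intervalIntegral.intervalIntegral_pos_of_pos_on
      (myG_cont.intervalIntegrable _ _) (fun u _ => Real.exp_pos _)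
    linarith
  linarith

lemma myG_tail {x : ℝ} (hx : 2 ≤ x) :
    (∫ u in Iic (-x), Real.exp (-u ^ 2 / 2)) ≤ Real.exp (-x) := by
  rw [myG_neg]
  have hint : MeasureTheory.IntegrableOn (fun u : ℝ => Real.exp (-u)) (Ioi x) := by
    have := exp_neg_integrableOn_Ioi x (by norm_num : (0:ℝ) < 1)
    simpa using this
  calc (∫ u in Ioi x, Real.exp (-u ^ 2 / 2)) ≤ ∫ u in Ioi x, Real.exp (-u) := by
        apply setIntegral_mono_on myG_integrable.integrableOn hint measurableSet_Ioi
        intro u hu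
        have hu' : x < u := hu
        apply Real.exp_le_exp.mpr
        nlinarith
    _ = Real.exp (-x) := integral_exp_neg_Ioi x

theorem stmt13 (Φ : ℝ → ℝ)
    (hΦ : ∀ x : ℝ, Φ x = (Real.sqrt (2 * π))⁻¹ * ∫ u in Set.Iic x, Real.exp (-u ^ 2 / 2))
    (f : ℝ → ℝ)
    (hf : ∀ x : ℝ, f x =
      Φ (Real.sqrt 2 * x) - Φ (-(Real.sqrt 2 * x))
        - Real.sqrt 2 * Real.exp (-x ^ 2 / 2) * Φ x
        + Real.sqrt 2 * Real.exp (-x ^ 2 / 2) * Φ (-x)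
        + 2 * Real.sqrt π * x * Φ (-x) * Φ x) :
    (∀ x : ℝ, HasDerivAt f (2 * Real.sqrt π * Φ (-x) * Φ x) x) ∧
    StrictMonoOn f (Set.Ici 0) ∧
    Continuous f ∧
    f 0 = 0 ∧
    Tendsto f atTop (nhds 1) ∧
    ∀ ς : ℝ, ς ∈ Set.Ioo (0 : ℝ) 1 → ∃! x : ℝ, 0 < x ∧ f x = 1 - ς := by
  have hs2pos : (0:ℝ) < Real.sqrt 2 := Real.sqrt_pos.mpr (by norm_num)
  have hsqpos : (0:ℝ) < Real.sqrt (2 * π) := Real.sqrt_pos.mpr (by positivity)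
  set c : ℝ := (Real.sqrt (2 * π))⁻¹ with hcdef
  have hcpos : 0 < c := inv_pos.mpr hsqpos
  have hΦeq : Φ = fun x => c * ∫ u in Set.Iic x, Real.exp (-u ^ 2 / 2) := funext hΦ
  have hΦd : ∀ x : ℝ, HasDerivAt Φ (c * Real.exp (-x ^ 2 / 2)) x := by
    intro x; rw [hΦeq]; exact (myG_hasDeriv x).const_mul c
  have hΦsum : ∀ x : ℝ, Φ x + Φ (-x) = 1 := by
    intro x
    rw [hΦ, hΦ, ← mul_add, myG_sum, hcdef, inv_mul_cancel₀ hsqpos.ne']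
  have hΦpos : ∀ x : ℝ, 0 < Φ x := by
    intro x; rw [hΦ]; exact mul_pos hcpos (myG_pos x)
  have hΦlt1 : ∀ x : ℝ, Φ x < 1 := by
    intro x
    have := hΦsum x
    have := hΦpos (-x)
    linarith
  have hΦtail : ∀ x : ℝ, 2 ≤ x → Φ (-x) ≤ c * Real.exp (-x) := by
    intro x hx
    rw [hΦ]
    exact mul_le_mul_of_nonneg_left (myG_tail hx) hcpos.le
  -- derivative
  have hfd : ∀ x : ℝ, HasDerivAt f (2 * Real.sqrt π * Φ (-x) * Φ x) x := by
    intro x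
    have h1 : HasDerivAt (fun y : ℝ => Φ (Real.sqrt 2 * y))
        (c * Real.exp (-(Real.sqrt 2 * x) ^ 2 / 2) * (Real.sqrt 2 * 1)) x :=
      HasDerivAt.comp x (hΦd _) ((hasDerivAt_id x).const_mul _)
    have h2 : HasDerivAt (fun y : ℝ => Φ (-(Real.sqrt 2 * y)))
        (c * Real.exp (-(-(Real.sqrt 2 * x)) ^ 2 / 2) * (-(Real.sqrt 2 * 1))) x :=
      HasDerivAt.comp x (hΦd _) ((hasDerivAt_id x).const_mul _).neg
    have he : HasDerivAt (fun y : ℝ => Real.exp (-y ^ 2 / 2))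
        (Real.exp (-x ^ 2 / 2) * (-(2 * x ^ 1) / 2)) x := by
      have hp : HasDerivAt (fun y : ℝ => -y ^ 2 / 2) (-(2 * x ^ 1) / 2) x := by
        have := ((hasDerivAt_pow 2 x).neg.div_const 2)
        simpa using this
      exact hp.exp
    have hmx : HasDerivAt (fun y : ℝ => Φ (-y)) (c * Real.exp (-(-x) ^ 2 / 2) * (-1)) x :=
      HasDerivAt.comp x (hΦd _) (hasDerivAt_neg x)
    have h3 := (he.const_mul (Real.sqrt 2)).mul (hΦd x)
    have h4 := (he.const_mul (Real.sqrt 2)).mul hmx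
    have h5 := (((hasDerivAt_id x).const_mul (2 * Real.sqrt π)).mul hmx).mul (hΦd x)
    have hF := (((h1.sub h2).sub h3).add h4).add h5
    have hfeq : f = fun y : ℝ =>
      Φ (Real.sqrt 2 * y) - Φ (-(Real.sqrt 2 * y))
        - Real.sqrt 2 * Real.exp (-y ^ 2 / 2) * Φ y
        + Real.sqrt 2 * Real.exp (-y ^ 2 / 2) * Φ (-y)
        + 2 * Real.sqrt π * y * Φ (-y) * Φ y := funext hf
    rw [hfeq]
    convert hF using 1
    case e'_4 => rfl
    case e'_5 => rfl
    case e'_8 => rfl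
    have e1 : (-(Real.sqrt 2 * x)) ^ 2 = (Real.sqrt 2 * x) ^ 2 := neg_sq _
    have e2 : (Real.sqrt 2 * x) ^ 2 = 2 * x ^ 2 := by
      rw [mul_pow, Real.sq_sqrt (by norm_num : (0:ℝ) ≤ 2)]
    have e3 : (-x : ℝ) ^ 2 = x ^ 2 := neg_sq x
    have e4 : Real.exp (-x ^ 2 / 2) * Real.exp (-x ^ 2 / 2) = Real.exp (-(2 * x ^ 2) / 2) := by
      rw [← Real.exp_add]; ring_nf
    have e5 : 2 * Real.sqrt π * c = Real.sqrt 2 := by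
      have h2' : Real.sqrt 2 * Real.sqrt (2 * π) = 2 * Real.sqrt π := by
        rw [Real.sqrt_mul (by norm_num : (0:ℝ) ≤ 2) π]
        nlinarith [Real.sq_sqrt (by norm_num : (0:ℝ) ≤ 2), Real.sqrt_nonneg π]
      rw [hcdef, ← h2', mul_assoc, mul_inv_cancel₀ hsqpos.ne', mul_one]
    simp only [id_eq, Pi.mul_apply, e1, e2, e3, ← e4]
    linear_combination (x * Real.exp (-x ^ 2 / 2) * (Φ x - Φ (-x))) * e5
  have hcont : Continuous f := by
    rw [continuous_iff_continuousAt]; exact fun x => (hfd x).continuousAt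
  have hmono : StrictMonoOn f (Set.Ici 0) := by
    apply strictMonoOn_of_deriv_pos (convex_Ici 0) hcont.continuousOn
    intro x _
    rw [(hfd x).deriv]
    have h1 := hΦpos x; have h2 := hΦpos (-x)
    have h3 : (0:ℝ) < Real.sqrt π := Real.sqrt_pos.mpr Real.pi_pos
    positivity
  have hf0 : f 0 = 0 := by
    rw [hf]; norm_num
  have hexp0 : Tendsto (fun t : ℝ => Real.exp (-t)) atTop (𝓝 0) :=
    Real.tendsto_exp_atBot.comp tendsto_neg_atTop_atBot
  have hΦneg0 : Tendsto (fun t : ℝ => Φ (-t)) atTop (𝓝 0) := by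
    have hup : Tendsto (fun t : ℝ => c * Real.exp (-t)) atTop (𝓝 0) := by
      have := hexp0.const_mul c; simpa using this
    apply tendsto_of_tendsto_of_tendsto_of_le_of_le' tendsto_const_nhds hup
    · exact Eventually.of_forall (fun t => (hΦpos (-t)).le)
    · filter_upwards [eventually_ge_atTop (2:ℝ)] with t ht
      exact hΦtail t ht
  have hΦtop : Tendsto Φ atTop (𝓝 1) := by
    have h := (tendsto_const_nhds (α := ℝ) (x := (1:ℝ)) (f := atTop)).sub hΦneg0
    rw [sub_zero] at h
    exact h.congr (fun t => by have := hΦsum t; linarith)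
  have pexp : Tendsto (fun x : ℝ => Real.exp (-x ^ 2 / 2)) atTop (𝓝 0) := by
    apply Real.tendsto_exp_atBot.comp
    have h1 : Tendsto (fun x : ℝ => x ^ 2) atTop atTop := tendsto_pow_atTop (by norm_num)
    exact (tendsto_neg_atTop_atBot.comp h1).atBot_div_const (by norm_num)
  have p1 : Tendsto (fun x : ℝ => Φ (Real.sqrt 2 * x)) atTop (𝓝 1) :=
    hΦtop.comp (Tendsto.const_mul_atTop hs2pos tendsto_id)
  have p2 : Tendsto (fun x : ℝ => Φ (-(Real.sqrt 2 * x))) atTop (𝓝 0) :=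
    hΦneg0.comp (Tendsto.const_mul_atTop hs2pos tendsto_id)
  have p3 : Tendsto (fun x : ℝ => Real.sqrt 2 * Real.exp (-x ^ 2 / 2) * Φ x) atTop (𝓝 0) := by
    have hup : Tendsto (fun x : ℝ => Real.sqrt 2 * Real.exp (-x ^ 2 / 2)) atTop (𝓝 0) := by
      have := pexp.const_mul (Real.sqrt 2); simpa using this
    apply tendsto_of_tendsto_of_tendsto_of_le_of_le' tendsto_const_nhds hup
    · exact Eventually.of_forall (fun x => by have h := (hΦpos x).le; positivity)
    · exact Eventually.of_forall (fun x => by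
        have h1 := hΦpos x; have h2 := hΦlt1 x
        have h3 : (0:ℝ) ≤ Real.sqrt 2 * Real.exp (-x ^ 2 / 2) := by positivity
        nlinarith)
  have p4 : Tendsto (fun x : ℝ => Real.sqrt 2 * Real.exp (-x ^ 2 / 2) * Φ (-x)) atTop (𝓝 0) := by
    have hup : Tendsto (fun x : ℝ => Real.sqrt 2 * Real.exp (-x ^ 2 / 2)) atTop (𝓝 0) := by
      have := pexp.const_mul (Real.sqrt 2); simpa using this
    apply tendsto_of_tendsto_of_tendsto_of_le_of_le' tendsto_const_nhds hup
    · exact Eventually.of_forall (fun x => by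
        have := hΦpos (-x); have h : (0:ℝ) ≤ Real.exp (-x ^ 2 / 2) := (Real.exp_pos _).le
        positivity)
    · exact Eventually.of_forall (fun x => by
        have h1 := hΦpos (-x); have h2 := hΦlt1 (-x)
        have h3 : (0:ℝ) ≤ Real.sqrt 2 * Real.exp (-x ^ 2 / 2) := by positivity
        nlinarith)
  have p5 : Tendsto (fun x : ℝ => 2 * Real.sqrt π * x * Φ (-x) * Φ x) atTop (𝓝 0) := by
    have hxe : Tendsto (fun x : ℝ => x * Real.exp (-x)) atTop (𝓝 0) := by
      have := Real.tendsto_pow_mul_exp_neg_atTop_nhds_zero 1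
      simpa using this
    have hup : Tendsto (fun x : ℝ => 2 * Real.sqrt π * c * (x * Real.exp (-x))) atTop (𝓝 0) := by
      have := hxe.const_mul (2 * Real.sqrt π * c); simpa using this
    apply tendsto_of_tendsto_of_tendsto_of_le_of_le' tendsto_const_nhds hup
    · filter_upwards [eventually_ge_atTop (0:ℝ)] with x hx
      have h1 := hΦpos (-x); have h2 := hΦpos x
      have h3 : (0:ℝ) ≤ Real.sqrt π := Real.sqrt_nonneg π
      positivity
    · filter_upwards [eventually_ge_atTop (2:ℝ)] with x hx
      have h1 := hΦpos (-x); have h2 := hΦpos x; have h2' := hΦlt1 x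
      have h4 := hΦtail x hx
      have h3 : (0:ℝ) ≤ Real.sqrt π := Real.sqrt_nonneg π
      have hx0 : (0:ℝ) ≤ x := by linarith
      have hse : (0:ℝ) < Real.exp (-x) := Real.exp_pos _
      have key : Φ (-x) * Φ x ≤ (c * Real.exp (-x)) * 1 :=
        mul_le_mul h4 h2'.le h2.le (by positivity)
      have key2 := mul_le_mul_of_nonneg_left key
        (by positivity : (0:ℝ) ≤ 2 * Real.sqrt π * x)
      nlinarith [key2]
  have htop : Tendsto f atTop (𝓝 1) := by
    have h := ((((p1.sub p2).sub p3).add p4).add p5)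
    rw [show (1:ℝ) - 0 - 0 + 0 + 0 = 1 by ring] at h
    exact h.congr (fun x => (hf x).symm)
  refine ⟨hfd, hmono, hcont, hf0, htop, ?_⟩
  intro ς hς
  obtain ⟨hς0, hς1⟩ := hς
  have hev : ∀ᶠ x in atTop, 1 - ς < f x :=
    htop.eventually (eventually_gt_nhds (by linarith))
  obtain ⟨b, hb1, hb2⟩ := (hev.and (eventually_ge_atTop (0:ℝ))).exists
  have hmem : (1 - ς) ∈ Set.Ioo (f 0) (f b) := by
    rw [hf0]; exact ⟨by linarith, hb1⟩
  obtain ⟨x, hx, hfx⟩ := intermediate_value_Ioo hb2 hcont.continuousOn hmem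
  refine ⟨x, ⟨hx.1, hfx⟩, ?_⟩
  rintro y ⟨hy, hfy⟩
  exact hmono.injOn (le_of_lt hy) (le_of_lt hx.1) (by rw [hfy, hfx])
end

section
/- Let $\ell$ be a measurable function slowly varying at infinity. Then there exists a positive function $c$ with $\lim_{t\to\infty} c(t)/t = \infty$ and $\lim_{t\to\infty} \ell(c(t))/\ell(t) = 1$. -/
open Real Filter

theorem stmt14 (ℓ : ℝ → ℝ) (hmeas : Measurable ℓ)
    (hpos : ∀ t : ℝ, 0 < t → 0 < ℓ t)
    (hslow : ∀ lam : ℝ, 0 < lam →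
      Tendsto (fun t => ℓ (lam * t) / ℓ t) atTop (nhds 1)) :
    ∃ c : ℝ → ℝ, (∀ t : ℝ, 0 < c t) ∧
      Tendsto (fun t => c t / t) atTop atTop ∧
      Tendsto (fun t => ℓ (c t) / ℓ t) atTop (nhds 1) := by
  classical
  -- For each n, get a threshold T n beyond which the ratio with multiplier n+1 is within 1/(n+1).
  have hT : ∀ n : ℕ, ∃ T : ℝ, ∀ t : ℝ, T ≤ t →
      |ℓ (((n : ℝ) + 1) * t) / ℓ t - 1| ≤ 1 / ((n : ℝ) + 1) := by
    intro n
    have h := hslow ((n : ℝ) + 1) (by positivity)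
    have h2 : ∀ᶠ t in atTop, |ℓ (((n : ℝ) + 1) * t) / ℓ t - 1| ≤ 1 / ((n : ℝ) + 1) := by
      have := h.eventually
        (Metric.closedBall_mem_nhds (1 : ℝ) (by positivity : (0:ℝ) < 1 / ((n : ℝ) + 1)))
      filter_upwards [this] with t ht
      simpa [Real.dist_eq] using ht
    obtain ⟨T, hTT⟩ := eventually_atTop.mp h2
    exact ⟨T, fun t ht => hTT t ht⟩
  choose T hT using hT
  -- An increasing sequence of thresholds S with S n ≥ T n and S n ≥ n + 1.
  let S : ℕ → ℝ := fun n => Nat.rec (max 1 (T 0)) (fun k Sk => max (Sk + 1) (T (k + 1))) n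
  have hST : ∀ n, T n ≤ S n := by
    intro n
    cases n with
    | zero => exact le_max_right _ _
    | succ k => exact le_max_right _ _
  have hSn : ∀ n : ℕ, (n : ℝ) + 1 ≤ S n := by
    intro n
    induction n with
    | zero => exact le_trans (by norm_num) (le_max_left (1 : ℝ) (T 0))
    | succ k ih =>
      have : (k : ℝ) + 1 + 1 ≤ S k + 1 := by linarith
      calc ((k + 1 : ℕ) : ℝ) + 1 = (k : ℝ) + 1 + 1 := by push_cast; ring
        _ ≤ S k + 1 := this
        _ ≤ S (k + 1) := le_max_left _ _
  -- N t : index of the largest threshold ≤ t.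
  let N : ℝ → ℕ := fun t => @Nat.findGreatest (fun n => S n ≤ t) (Classical.decPred _) ⌈t⌉₊
  have hNge : ∀ (n : ℕ) (t : ℝ), S n ≤ t → n ≤ N t := by
    intro n t hn
    have h1 : (n : ℝ) ≤ t := le_trans (by linarith [hSn n]) hn
    have h2 : (n : ℝ) ≤ (⌈t⌉₊ : ℝ) := h1.trans (Nat.le_ceil t)
    exact @Nat.le_findGreatest _ (fun n => S n ≤ t) (Classical.decPred _) _ (by exact_mod_cast h2) hn
  have hSNle : ∀ (n : ℕ) (t : ℝ), S n ≤ t → S (N t) ≤ t := by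
    intro n t hn
    have h1 : (n : ℝ) ≤ t := le_trans (by linarith [hSn n]) hn
    have h2 : (n : ℝ) ≤ (⌈t⌉₊ : ℝ) := h1.trans (Nat.le_ceil t)
    exact @Nat.findGreatest_spec _ (fun n => S n ≤ t) (Classical.decPred _) _ (by exact_mod_cast h2) hn
  -- The function c.
  refine ⟨fun t => if 1 ≤ t then ((N t : ℝ) + 1) * t else 1, ?_, ?_, ?_⟩
  · intro t
    by_cases h : 1 ≤ t
    · simp only [h, if_true]
      have : (0 : ℝ) < t := lt_of_lt_of_le one_pos h
      positivity
    · simp [h]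
  · rw [tendsto_atTop]
    intro b
    obtain ⟨n, hn⟩ := exists_nat_gt b
    filter_upwards [eventually_ge_atTop (max 1 (S n))] with t ht
    have ht1 : (1 : ℝ) ≤ t := le_trans (le_max_left _ _) ht
    have htS : S n ≤ t := le_trans (le_max_right _ _) ht
    have htpos : (0 : ℝ) < t := lt_of_lt_of_le one_pos ht1
    have hN : n ≤ N t := hNge n t htS
    simp only [ht1, if_true]
    rw [mul_div_assoc, div_self (ne_of_gt htpos), mul_one]
    have : (n : ℝ) ≤ (N t : ℝ) := by exact_mod_cast hN
    linarith [hn.le]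
  · rw [Metric.tendsto_nhds]
    intro ε hε
    obtain ⟨n, hn⟩ := exists_nat_gt (1 / ε)
    have hnε : 1 / ((n : ℝ) + 1) < ε := by
      rw [div_lt_iff₀ (by positivity)]
      rw [div_lt_iff₀ hε] at hn
      nlinarith
    filter_upwards [eventually_ge_atTop (max 1 (S n))] with t ht
    have ht1 : (1 : ℝ) ≤ t := le_trans (le_max_left _ _) ht
    have htS : S n ≤ t := le_trans (le_max_right _ _) ht
    have hN : n ≤ N t := hNge n t htS
    have hSle : S (N t) ≤ t := hSNle n t htS
    have hTle : T (N t) ≤ t := le_trans (hST (N t)) hSle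
    have key := hT (N t) t hTle
    simp only [ht1, if_true, Real.dist_eq]
    have h1 : (1 : ℝ) / ((N t : ℝ) + 1) ≤ 1 / ((n : ℝ) + 1) := by
      apply one_div_le_one_div_of_le (by positivity)
      have : (n : ℝ) ≤ (N t : ℝ) := by exact_mod_cast hN
      linarith
    calc |ℓ (((N t : ℝ) + 1) * t) / ℓ t - 1| ≤ 1 / ((N t : ℝ) + 1) := key
      _ ≤ 1 / ((n : ℝ) + 1) := h1
      _ < ε := hnε
end
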